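/- Let kappa be real, q = exp(-2 kappa^2), b a complex constant, s complex, and n >= 1. Then integral over R of L_n(b e^{i kappa x}, s | q) e^{i x y - x^2/2} dx = sqrt(2 pi) q^{n^2/4} L_n(b e^{-kappa y}, s | 1/q) e^{-y^2/2} for all real y. -/

import Mathlib

open Finset Real

noncomputable def qPoch (q z : ℂ) (n : ℕ) : ℂ := ∏ j ∈ range n, (1 - z * q ^ j)

noncomputable def qBinom (q : ℂ) (n k : ℕ) : ℂ :=
  qPoch q q n / (qPoch q q k * qPoch q q (n - k))

noncomputable def qBracket (q : ℂ) (n : ℕ) : ℂ := (1 - q ^ n) / (1 - q)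

/-- The q-Lucas polynomials of Cigler (for `n ≥ 1`). -/
noncomputable def qLuc (q : ℂ) (n : ℕ) (x s : ℂ) : ℂ :=
  ∑ k ∈ range (n / 2 + 1),
    q ^ (k * (k - 1) / 2) * (qBracket q n / qBracket q (n - k)) *
      qBinom q (n - k) k * s ^ k * x ^ (n - 2 * k)

lemma even_tri (k : ℕ) : k * (k - 1) / 2 * 2 = k * (k - 1) := by
  rcases k with _ | j
  · simp
  · simp only [Nat.succ_sub_one]
    have hev : Even ((j + 1) * j) := by simpa [mul_comm] using Nat.even_mul_succ_self j
    exact Nat.div_mul_cancel hev.two_dvd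

lemma even_tri' (k : ℕ) : k * (k + 1) / 2 * 2 = k * (k + 1) :=
  Nat.div_mul_cancel (Nat.even_mul_succ_self k).two_dvd

lemma tri_add (m k : ℕ) : (m + k) * (m + k + 1) / 2 = k * m + k * (k + 1) / 2 + m * (m + 1) / 2 := by
  have e1 := even_tri' k
  have e2 := even_tri' m
  have e3 := even_tri' (m + k)
  have h : (m + k) * (m + k + 1) = 2 * (k * m) + k * (k + 1) + m * (m + 1) := by ring
  omega

lemma qPoch_ne_zero {q : ℂ} (hq1 : ∀ j, 1 ≤ j → q ^ j ≠ 1) (m : ℕ) : qPoch q q m ≠ 0 := by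
  unfold qPoch
  apply Finset.prod_ne_zero_iff.2
  intro j _
  have : q * q ^ j = q ^ (j + 1) := by ring
  rw [this]
  intro h
  exact hq1 (j + 1) (by omega) (by linear_combination -h)

lemma qPoch_inv {q : ℂ} (hq0 : q ≠ 0) (m : ℕ) :
    qPoch q⁻¹ q⁻¹ m = (-1) ^ m * (q⁻¹) ^ (m * (m + 1) / 2) * qPoch q q m := by
  unfold qPoch
  have h : ∀ j ∈ range m, (1 - q⁻¹ * (q⁻¹) ^ j) = (-q⁻¹ * (q⁻¹) ^ j) * (1 - q * q ^ j) := by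
    intro j _
    have hqj : q ^ j ≠ 0 := pow_ne_zero _ hq0
    have h1 : q⁻¹ * q = 1 := inv_mul_cancel₀ hq0
    have h2 : q⁻¹ ^ j * q ^ j = 1 := by rw [inv_pow, inv_mul_cancel₀ hqj]
    linear_combination (-(q⁻¹ ^ j * q ^ j)) * h1 - h2
  rw [Finset.prod_congr rfl h, Finset.prod_mul_distrib]
  congr 1
  rw [Finset.prod_mul_distrib, Finset.prod_const, Finset.prod_pow_eq_pow_sum,
    Finset.sum_range_id, Finset.card_range, neg_pow, mul_assoc, ← pow_add]
  have he : m + m * (m - 1) / 2 = m * (m + 1) / 2 := by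
    have := even_tri m
    have := even_tri' m
    have h2 : m * (m + 1) = m * (m - 1) + 2 * m := by
      rcases m with _ | j
      · simp
      · simp only [Nat.succ_sub_one]; ring
    omega
  rw [he]

lemma qBinom_inv {q : ℂ} (hq0 : q ≠ 0) (hq1 : ∀ j, 1 ≤ j → q ^ j ≠ 1) (m k : ℕ) :
    qBinom q⁻¹ (m + k) k = (q⁻¹) ^ (k * m) * qBinom q (m + k) k := by
  unfold qBinom
  rw [Nat.add_sub_cancel, qPoch_inv hq0, qPoch_inv hq0, qPoch_inv hq0, tri_add]
  have p1 := qPoch_ne_zero hq1 k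
  have p2 := qPoch_ne_zero hq1 m
  rw [pow_add, pow_add, pow_add]
  have hqi : (q:ℂ)⁻¹ ≠ 0 := inv_ne_zero hq0
  have hden : ((-1:ℂ)) ^ k * q⁻¹ ^ (k * (k + 1) / 2) * qPoch q q k *
      ((-1:ℂ) ^ m * q⁻¹ ^ (m * (m + 1) / 2) * qPoch q q m) ≠ 0 := by
    apply mul_ne_zero
    · exact mul_ne_zero (mul_ne_zero (pow_ne_zero _ (by norm_num)) (pow_ne_zero _ hqi)) p1
    · exact mul_ne_zero (mul_ne_zero (pow_ne_zero _ (by norm_num)) (pow_ne_zero _ hqi)) p2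
  rw [div_eq_iff hden]
  field_simp

lemma qBracket_ratio {q : ℂ} (hq0 : q ≠ 0) (hq1 : ∀ j, 1 ≤ j → q ^ j ≠ 1)
    (a k : ℕ) (ha : 1 ≤ a) :
    qBracket q⁻¹ (a + k) / qBracket q⁻¹ a = (q⁻¹) ^ k * (qBracket q (a + k) / qBracket q a) := by
  unfold qBracket
  have hq1' : (1 : ℂ) - q ≠ 0 := fun h => hq1 1 le_rfl (by rw [pow_one]; linear_combination -h)
  have hqinv1 : (1 : ℂ) - q⁻¹ ≠ 0 := by
    intro h
    apply hq1'
    have : q⁻¹ = 1 := by linear_combination -h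
    have := congrArg (· * q) this
    simp [inv_mul_cancel₀ hq0] at this
    linear_combination this
  have ha' : (1 : ℂ) - q ^ a ≠ 0 := fun h => hq1 a ha (by linear_combination -h)
  have hik : ∀ j : ℕ, (1 : ℂ) - (q⁻¹) ^ j = -((q⁻¹) ^ j) * (1 - q ^ j) := by
    intro j
    have : (q⁻¹) ^ j * q ^ j = 1 := by
      rw [inv_pow, inv_mul_cancel₀ (pow_ne_zero _ hq0)]
    linear_combination -this
  have hqi : (q:ℂ)⁻¹ ≠ 0 := inv_ne_zero hq0
  have hinva : (1:ℂ) - (q⁻¹) ^ a ≠ 0 := by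
    rw [hik a]
    exact mul_ne_zero (neg_ne_zero.2 (pow_ne_zero _ hqi)) ha'
  rw [div_div_div_comm, div_self hqinv1, div_one, div_div_div_comm, div_self hq1', div_one,
    hik (a + k), hik a, pow_add, pow_add, div_eq_iff
      (mul_ne_zero (neg_ne_zero.2 (pow_ne_zero _ hqi)) ha')]
  field_simp

lemma gauss_int (t : ℝ) :
    ∫ x : ℝ, Complex.exp (Complex.I * t * x - x ^ 2 / 2) =
      (Real.sqrt (2 * π) : ℂ) * Complex.exp (-(t : ℂ) ^ 2 / 2) := by
  have h : ∀ x : ℝ, Complex.exp (Complex.I * t * x - x ^ 2 / 2) =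
      Complex.exp (Complex.I * t * x) * Complex.exp (-(1/2 : ℂ) * x ^ 2) := by
    intro x
    rw [← Complex.exp_add]
    ring_nf
  simp_rw [h]
  rw [fourierIntegral_gaussian (by norm_num : (0:ℝ) < ((1:ℂ)/2).re) (t : ℂ)]
  congr 1
  · rw [show (π : ℂ) / (1/2) = ((2 * π : ℝ) : ℂ) by push_cast; ring]
    rw [show ((1:ℂ)/2) = ((1/2 : ℝ) : ℂ) by norm_num,
      ← Complex.ofReal_cpow (by positivity)]
    norm_num [Real.sqrt_eq_rpow]
  · congr 1
    ring

lemma gauss_integrable (t : ℝ) :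
    MeasureTheory.Integrable (fun x : ℝ ↦ Complex.exp (Complex.I * t * x - x ^ 2 / 2)) := by
  have := integrable_cexp_quadratic (by norm_num : (0:ℝ) < ((1:ℂ)/2).re) (Complex.I * t) 0
  convert this using 2 with x
  ring_nf

lemma key_q {q : ℂ} (hq0 : q ≠ 0) (hq1 : ∀ j, 1 ≤ j → q ^ j ≠ 1) (n k : ℕ)
    (hn : 1 ≤ n) (hk : 2 * k ≤ n) :
    (q⁻¹) ^ (k * (k - 1) / 2) * (qBracket q⁻¹ n / qBracket q⁻¹ (n - k)) * qBinom q⁻¹ (n - k) k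
    = (q⁻¹) ^ (k * (n - k)) *
        (q ^ (k * (k - 1) / 2) * (qBracket q n / qBracket q (n - k)) * qBinom q (n - k) k) := by
  obtain ⟨m, rfl⟩ : ∃ m, n = m + 2 * k := ⟨n - 2 * k, by omega⟩
  have h1 : m + 2 * k - k = m + k := by omega
  have h2 : m + 2 * k = (m + k) + k := by omega
  rw [h1, h2, qBracket_ratio hq0 hq1 (m + k) k (by omega), qBinom_inv hq0 hq1 m k]
  have hDD : (q⁻¹) ^ (k * (k - 1) / 2) * q ^ (k * (k - 1) / 2) = 1 := by
    rw [inv_pow, inv_mul_cancel₀ (pow_ne_zero _ hq0)]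
  have hexp : k * (m + k) = k * (k - 1) / 2 + k + k * m + k * (k - 1) / 2 := by
    have e1 := even_tri k
    have e2 : k * (k - 1) + k = k * k := by
      rcases k with _ | j
      · simp
      · simp only [Nat.succ_sub_one]; ring
    have e3 : k * (m + k) = k * m + k * k := by ring
    omega
  have hsplit : (q⁻¹ : ℂ) ^ (k * (m + k)) =
      q⁻¹ ^ (k * (k - 1) / 2) * q⁻¹ ^ k * q⁻¹ ^ (k * m) * q⁻¹ ^ (k * (k - 1) / 2) := by
    rw [← pow_add, ← pow_add, ← pow_add, hexp]
  rw [hsplit]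
  linear_combination (-(q⁻¹ ^ (k * (k - 1) / 2) * q⁻¹ ^ k * q⁻¹ ^ (k * m) *
    (qBracket q (m + k + k) / qBracket q (m + k)) * qBinom q (m + k) k)) * hDD

theorem qLuc_fourier_transform (κ : ℝ) (hκ : κ ≠ 0) (b s : ℂ) (n : ℕ) (hn : 1 ≤ n) (y : ℝ) :
    (∫ x : ℝ, qLuc (Real.exp (-2 * κ ^ 2) : ℂ) n
          (b * Complex.exp (Complex.I * κ * x)) s *
        Complex.exp (Complex.I * x * y - x ^ 2 / 2)) =
      ((Real.sqrt (2 * π) * (Real.exp (-2 * κ ^ 2)) ^ ((n : ℝ) ^ 2 / 4) : ℝ) : ℂ) *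
        qLuc ((Real.exp (-2 * κ ^ 2) : ℂ))⁻¹ n (b * (Real.exp (-(κ * y)) : ℂ)) s *
        Complex.exp (-(y ^ 2) / 2) := by
  have hκ2 : (0:ℝ) < κ ^ 2 := by positivity
  set Q : ℝ := Real.exp (-2 * κ ^ 2) with hQdef
  set q : ℂ := (Q : ℂ) with hqdef
  have hQpos : 0 < Q := Real.exp_pos _
  have hQlt : Q < 1 := by
    rw [hQdef, show (1:ℝ) = Real.exp 0 by rw [Real.exp_zero]]
    exact Real.exp_lt_exp.2 (by nlinarith)
  have hq0 : q ≠ 0 := by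
    rw [hqdef]
    exact_mod_cast hQpos.ne'
  have hq1 : ∀ j, 1 ≤ j → q ^ j ≠ 1 := by
    intro j hj h
    rw [hqdef, ← Complex.ofReal_pow, ← Complex.ofReal_one] at h
    have hQj : Q ^ j = 1 := Complex.ofReal_injective h
    have hlt : Q ^ j < 1 := pow_lt_one₀ hQpos.le hQlt (by omega)
    linarith
  unfold qLuc
  -- rewrite each integrand summand
  have hfeq : ∀ k : ℕ,
      (fun x : ℝ => (q ^ (k * (k - 1) / 2) * (qBracket q n / qBracket q (n - k)) *
          qBinom q (n - k) k * s ^ k * (b * Complex.exp (Complex.I * κ * x)) ^ (n - 2 * k)) *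
          Complex.exp (Complex.I * x * y - x ^ 2 / 2)) =
      (fun x : ℝ => (q ^ (k * (k - 1) / 2) * (qBracket q n / qBracket q (n - k)) *
          qBinom q (n - k) k * s ^ k * b ^ (n - 2 * k)) *
          Complex.exp (Complex.I * ((κ * (n - 2 * k : ℕ) + y : ℝ) : ℂ) * x - x ^ 2 / 2)) := by
    intro k
    funext x
    have h1 : (b * Complex.exp (Complex.I * κ * x)) ^ (n - 2 * k) =
        b ^ (n - 2 * k) * Complex.exp (((n - 2 * k : ℕ) : ℂ) * (Complex.I * κ * x)) := by
      rw [mul_pow, ← Complex.exp_nat_mul]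
    have h2 : Complex.exp (((n - 2 * k : ℕ) : ℂ) * (Complex.I * κ * x)) *
        Complex.exp (Complex.I * x * y - x ^ 2 / 2) =
        Complex.exp (Complex.I * ((κ * (n - 2 * k : ℕ) + y : ℝ) : ℂ) * x - x ^ 2 / 2) := by
      rw [← Complex.exp_add]
      congr 1
      push_cast
      ring
    rw [h1, ← h2]
    ring
  simp only [Finset.sum_mul]
  rw [MeasureTheory.integral_finset_sum _ (by
    intro k _
    rw [hfeq k]
    exact (gauss_integrable _).const_mul _)]
  have hint : ∀ k ∈ Finset.range (n / 2 + 1),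
      (∫ x : ℝ, (q ^ (k * (k - 1) / 2) * (qBracket q n / qBracket q (n - k)) *
          qBinom q (n - k) k * s ^ k * (b * Complex.exp (Complex.I * κ * x)) ^ (n - 2 * k)) *
          Complex.exp (Complex.I * x * y - x ^ 2 / 2)) =
      (q ^ (k * (k - 1) / 2) * (qBracket q n / qBracket q (n - k)) *
          qBinom q (n - k) k * s ^ k * b ^ (n - 2 * k)) *
          ((Real.sqrt (2 * π) : ℂ) *
            Complex.exp (-((κ * (n - 2 * k : ℕ) + y : ℝ) : ℂ) ^ 2 / 2)) := by
    intro k _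
    rw [hfeq k, MeasureTheory.integral_const_mul, gauss_int]
  rw [Finset.sum_congr rfl hint]
  rw [Finset.mul_sum, Finset.sum_mul]
  apply Finset.sum_congr rfl
  intro k hk
  have hm : 2 * k ≤ n := by
    have := Finset.mem_range.1 hk
    omega
  have hkn : k ≤ n := by omega
  -- cast and exponential facts
  have ecast : ((Real.sqrt (2 * π) * Q ^ ((n : ℝ) ^ 2 / 4) : ℝ) : ℂ) =
      (Real.sqrt (2 * π) : ℂ) * ((Q ^ ((n : ℝ) ^ 2 / 4) : ℝ) : ℂ) := by push_cast; ring
  have e2 : (Q : ℝ) ^ ((n : ℝ) ^ 2 / 4) = Real.exp (-(κ ^ 2 * (n : ℝ) ^ 2 / 2)) := by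
    rw [hQdef, Real.rpow_def_of_pos (Real.exp_pos _), Real.log_exp]
    congr 1
    ring
  have e3 : Complex.exp (-((κ * (n - 2 * k : ℕ) + y : ℝ) : ℂ) ^ 2 / 2) =
      ((Real.exp (-(κ ^ 2 * ((n - 2 * k : ℕ) : ℝ) ^ 2 / 2)) : ℝ) : ℂ) *
      ((Real.exp (((n - 2 * k : ℕ) : ℝ) * -(κ * y)) : ℝ) : ℂ) *
      Complex.exp (-(y : ℂ) ^ 2 / 2) := by
    rw [Complex.ofReal_exp, Complex.ofReal_exp, ← Complex.exp_add, ← Complex.exp_add]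
    congr 1
    push_cast
    ring
  have e4 : (b * ((Real.exp (-(κ * y)) : ℝ) : ℂ)) ^ (n - 2 * k) =
      b ^ (n - 2 * k) * ((Real.exp (((n - 2 * k : ℕ) : ℝ) * -(κ * y)) : ℝ) : ℂ) := by
    rw [mul_pow, ← Complex.ofReal_pow, ← Real.exp_nat_mul]
  have e5 : ((Real.exp (-(κ ^ 2 * ((n - 2 * k : ℕ) : ℝ) ^ 2 / 2)) : ℝ) : ℂ) =
      ((Real.exp (-(κ ^ 2 * (n : ℝ) ^ 2 / 2)) : ℝ) : ℂ) * (q⁻¹) ^ (k * (n - k)) := by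
    rw [hqdef, ← Complex.ofReal_inv, ← Complex.ofReal_pow, ← Complex.ofReal_mul]
    congr 1
    rw [← Real.exp_neg, ← Real.exp_nat_mul, ← Real.exp_add]
    congr 1
    push_cast [Nat.cast_sub hm, Nat.cast_sub hkn]
    ring
  have hkey := key_q hq0 hq1 n k hn hm
  rw [ecast, e2, e3, e4, e5, hkey]
  ring
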